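/- arXiv:2408.16348 — 3 statements merged into one kernel-verified Lean document; each statement's English description precedes it below -/
import Mathlib

section
/- Let f₁, f₂ : ℝ³ → ℝ≥0 be measurable functions in L² such that the ξ-support of fⱼ is contained in an interval Iⱼ of length at most N_min, the η-support satisfies the group-velocity separation |η₁/ξ₁ − η₂/ξ₂| ≥ c·D for all points in the supports, and the τ-support of fᵢ is contained in {|τ − ω_α(ξ,η)| ≤ Lᵢ}. Then ‖f₁ ∗ f₂‖_{L²(ℝ³)} ≤ C · N_min^{1/2} · L_min^{1/2} · (L_max/D)^{1/2} · ‖f₁‖_{L²} ‖f₂‖_{L²}, where L_min = min(L₁,L₂), L_max = max(L₁,L₂). -/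
open MeasureTheory
open scoped ENNReal

/-- The KP-I dispersion relation. -/
noncomputable def omegaKP (α ξ η : ℝ) : ℝ := ξ * |ξ| ^ α + η ^ 2 / ξ

/-- Convolution of two functions on `ℝ³ = ℝ × ℝ × ℝ`. -/
noncomputable def conv3 (f g : ℝ × ℝ × ℝ → ℝ) (x : ℝ × ℝ × ℝ) : ℝ :=
  ∫ y, f y * g (x - y)

lemma vol_le_of_pairwise {S : Set ℝ} {r : ℝ}
    (h : ∀ s ∈ S, ∀ t ∈ S, |s - t| ≤ r) : volume S ≤ ENNReal.ofReal (2 * r) := by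
  rcases S.eq_empty_or_nonempty with hS | ⟨t₀, ht₀⟩
  · simp [hS]
  · have hsub : S ⊆ Set.Icc (t₀ - r) (t₀ + r) := by
      intro s hs
      have h1 := h s hs t₀ ht₀
      rw [abs_sub_le_iff] at h1
      exact ⟨by linarith [h1.2], by linarith [h1.1]⟩
    calc volume S ≤ volume (Set.Icc (t₀ - r) (t₀ + r)) := measure_mono hsub
      _ = ENNReal.ofReal (2 * r) := by rw [Real.volume_Icc]; congr 1; ring

lemma slice_vol_bound (ξ ξ' η₀ K M σ : ℝ) (hσ : 0 < σ) (hM : 0 ≤ M) :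
    volume {t : ℝ | |t ^ 2 / ξ + (η₀ - t) ^ 2 / ξ' - K| ≤ M ∧ σ ≤ |t / ξ - (η₀ - t) / ξ'|} ≤
      ENNReal.ofReal (4 * M / σ) := by
  set φ : ℝ → ℝ := fun t => t / ξ - (η₀ - t) / ξ' with hφ
  set h : ℝ → ℝ := fun t => t ^ 2 / ξ + (η₀ - t) ^ 2 / ξ' with hh
  set S : Set ℝ := {t : ℝ | |h t - K| ≤ M ∧ σ ≤ |φ t|} with hS
  have key : ∀ s t : ℝ, h s - h t = (s - t) * (φ s + φ t) := by
    intro s t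
    simp only [hh, hφ, div_eq_mul_inv]
    ring
  have branch : ∀ T : Set ℝ, T ⊆ S → (∀ s ∈ T, ∀ t ∈ T, 2 * σ ≤ |φ s + φ t|) →
      volume T ≤ ENNReal.ofReal (2 * (M / σ)) := by
    intro T hTS hsep
    apply vol_le_of_pairwise
    intro s hs t ht
    have h1 := (hTS hs).1
    have h2 := (hTS ht).1
    have h2M : |h s - h t| ≤ 2 * M := by
      calc |h s - h t| = |(h s - K) - (h t - K)| := by ring_nf
        _ ≤ |h s - K| + |h t - K| := abs_sub _ _
        _ ≤ 2 * M := by linarith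
    have habs : |s - t| * |φ s + φ t| ≤ 2 * M := by
      rw [← abs_mul, ← key s t]; exact h2M
    have h2σ := hsep s hs t ht
    rw [le_div_iff₀ hσ]
    nlinarith [abs_nonneg (s - t), abs_nonneg (φ s + φ t)]
  have cover : S ⊆ {t | t ∈ S ∧ σ ≤ φ t} ∪ {t | t ∈ S ∧ φ t ≤ -σ} := by
    intro t ht
    rcases le_abs.mp ht.2 with h | h
    · exact Or.inl ⟨ht, h⟩
    · exact Or.inr ⟨ht, by linarith⟩
  calc volume S ≤ volume ({t | t ∈ S ∧ σ ≤ φ t} ∪ {t | t ∈ S ∧ φ t ≤ -σ}) := measure_mono cover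
    _ ≤ volume {t | t ∈ S ∧ σ ≤ φ t} + volume {t | t ∈ S ∧ φ t ≤ -σ} := measure_union_le _ _
    _ ≤ ENNReal.ofReal (2 * (M / σ)) + ENNReal.ofReal (2 * (M / σ)) := by
        gcongr
        · apply branch _ (fun t ht => ht.1)
          intro s hs t ht
          have := hs.2; have := ht.2
          rw [le_abs]; left; linarith
        · apply branch _ (fun t ht => ht.1)
          intro s hs t ht
          have := hs.2; have := ht.2
          rw [le_abs]; right; linarith
    _ = ENNReal.ofReal (4 * M / σ) := by
        rw [← ENNReal.ofReal_add (by positivity) (by positivity)]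
        congr 1; field_simp; ring

lemma vol_E_bound (α c : ℝ) (f₁ f₂ : ℝ × ℝ × ℝ → ℝ) (I₁ : Set ℝ)
    (Nmin D L₁ L₂ a₁ : ℝ) (hc : 0 < c) (hD : 0 < D) (hL₁ : 0 < L₁) (hL₂ : 0 < L₂)
    (hm₁ : Measurable f₁) (hm₂ : Measurable f₂)
    (ha₁ : I₁ ⊆ Set.Icc a₁ (a₁ + Nmin))
    (hsupp₁ : ∀ p ∈ Function.support f₁, p.2.1 ∈ I₁)
    (hsep : ∀ p ∈ Function.support f₁, ∀ q ∈ Function.support f₂,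
        c * D ≤ |p.2.2 / p.2.1 - q.2.2 / q.2.1|)
    (hmod₁ : ∀ p ∈ Function.support f₁, |p.1 - omegaKP α p.2.1 p.2.2| ≤ L₁)
    (hmod₂ : ∀ p ∈ Function.support f₂, |p.1 - omegaKP α p.2.1 p.2.2| ≤ L₂)
    (x : ℝ × ℝ × ℝ) :
    volume {y : ℝ × ℝ × ℝ | f₁ y ≠ 0 ∧ f₂ (x - y) ≠ 0} ≤
      ENNReal.ofReal (2 * min L₁ L₂) * ENNReal.ofReal (4 * (L₁ + L₂) / (c * D)) *
        ENNReal.ofReal Nmin := by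
  obtain ⟨τ₀, ξ₀, η₀⟩ := x
  set E := {y : ℝ × ℝ × ℝ | f₁ y ≠ 0 ∧ f₂ ((τ₀, ξ₀, η₀) - y) ≠ 0} with hEdef
  have hE : MeasurableSet E := by
    have h1 : MeasurableSet {y : ℝ × ℝ × ℝ | f₁ y ≠ 0} :=
      hm₁ (measurableSet_singleton 0).compl
    have h2 : MeasurableSet {y : ℝ × ℝ × ℝ | f₂ ((τ₀, ξ₀, η₀) - y) ≠ 0} :=
      (hm₂.comp (measurable_const.sub measurable_id)) (measurableSet_singleton 0).compl
    exact h1.inter h2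
  set Kset : Set ℝ := Set.Icc a₁ (a₁ + Nmin) with hKdef
  set Sset : ℝ → Set ℝ := fun ξ =>
    {η | |omegaKP α ξ η + omegaKP α (ξ₀ - ξ) (η₀ - η) - τ₀| ≤ L₁ + L₂ ∧
      c * D ≤ |η / ξ - (η₀ - η) / (ξ₀ - ξ)|} with hSdef
  -- pointwise τ-integral bound
  have step1 : ∀ ξ η : ℝ, (∫⁻ τ, E.indicator 1 (τ, ξ, η)) ≤
      ENNReal.ofReal (2 * min L₁ L₂) * Kset.indicator 1 ξ * (Sset ξ).indicator 1 η := by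
    intro ξ η
    by_cases hne : ∃ τ, (τ, ξ, η) ∈ E
    · obtain ⟨τ₁, hτ₁⟩ := hne
      have hp1 : (τ₁, ξ, η) ∈ Function.support f₁ := Function.mem_support.mpr hτ₁.1
      have hp2 : ((τ₀, ξ₀, η₀) - (τ₁, ξ, η)) ∈ Function.support f₂ :=
        Function.mem_support.mpr hτ₁.2
      have hK : ξ ∈ Kset := ha₁ (hsupp₁ _ hp1)
      have hS : η ∈ Sset ξ := by
        constructor
        · have h1 := hmod₁ _ hp1
          have h2 := hmod₂ _ hp2
          simp only [Prod.mk_sub_mk] at h1 h2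
          calc |omegaKP α ξ η + omegaKP α (ξ₀ - ξ) (η₀ - η) - τ₀|
              = |-((τ₁ - omegaKP α ξ η) + (τ₀ - τ₁ - omegaKP α (ξ₀ - ξ) (η₀ - η)))| := by
                congr 1; ring
            _ = |(τ₁ - omegaKP α ξ η) + (τ₀ - τ₁ - omegaKP α (ξ₀ - ξ) (η₀ - η))| := abs_neg _
            _ ≤ |τ₁ - omegaKP α ξ η| + |τ₀ - τ₁ - omegaKP α (ξ₀ - ξ) (η₀ - η)| := abs_add_le _ _
            _ ≤ L₁ + L₂ := add_le_add h1 h2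
        · have h3 := hsep _ hp1 _ hp2
          simpa using h3
      rw [Set.indicator_of_mem hK, Set.indicator_of_mem hS]
      simp only [Pi.one_apply, mul_one]
      set T : Set ℝ := Set.Icc (omegaKP α ξ η - L₁) (omegaKP α ξ η + L₁) ∩
        Set.Icc (τ₀ - omegaKP α (ξ₀ - ξ) (η₀ - η) - L₂)
          (τ₀ - omegaKP α (ξ₀ - ξ) (η₀ - η) + L₂) with hTdef
      have hsubT : ∀ τ : ℝ, E.indicator (1 : ℝ × ℝ × ℝ → ℝ≥0∞) (τ, ξ, η) ≤ T.indicator (1 : ℝ → ℝ≥0∞) τ := by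
        intro τ
        by_cases hτ : (τ, ξ, η) ∈ E
        · have h1 := hmod₁ _ (Function.mem_support.mpr hτ.1)
          have h2 := hmod₂ _ (Function.mem_support.mpr hτ.2)
          simp only [Prod.mk_sub_mk] at h1 h2
          rw [abs_le] at h1 h2
          have hmemT : τ ∈ T := ⟨⟨by linarith [h1.1], by linarith [h1.2]⟩,
            ⟨by linarith [h2.1], by linarith [h2.2]⟩⟩
          rw [Set.indicator_of_mem hτ, Set.indicator_of_mem hmemT]
          simp only [Pi.one_apply, le_refl]
        · rw [Set.indicator_of_notMem hτ]; exact zero_le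
      calc (∫⁻ τ, E.indicator 1 (τ, ξ, η)) ≤ ∫⁻ τ, T.indicator 1 τ := lintegral_mono hsubT
        _ ≤ volume T := lintegral_indicator_one_le _
        _ ≤ ENNReal.ofReal (2 * min L₁ L₂) := by
            rcases min_cases L₁ L₂ with ⟨hm, _⟩ | ⟨hm, _⟩ <;> rw [hm]
            · calc volume T ≤ volume (Set.Icc (omegaKP α ξ η - L₁) (omegaKP α ξ η + L₁)) :=
                    measure_mono Set.inter_subset_left
                _ = ENNReal.ofReal (2 * L₁) := by rw [Real.volume_Icc]; congr 1; ring
            · calc volume T ≤ volume (Set.Icc (τ₀ - omegaKP α (ξ₀ - ξ) (η₀ - η) - L₂)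
                    (τ₀ - omegaKP α (ξ₀ - ξ) (η₀ - η) + L₂)) :=
                    measure_mono Set.inter_subset_right
                _ = ENNReal.ofReal (2 * L₂) := by rw [Real.volume_Icc]; congr 1; ring
    · push_neg at hne
      have hz : ∀ τ : ℝ, E.indicator (1 : ℝ × ℝ × ℝ → ℝ≥0∞) (τ, ξ, η) = 0 := fun τ =>
        Set.indicator_of_notMem (hne τ) _
      simp only [hz, lintegral_zero]
      exact zero_le
  -- η-integral bound
  have hSsub : ∀ ξ : ℝ, Sset ξ ⊆ {t : ℝ | |t ^ 2 / ξ + (η₀ - t) ^ 2 / (ξ₀ - ξ) -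
      (τ₀ - ξ * |ξ| ^ α - (ξ₀ - ξ) * |ξ₀ - ξ| ^ α)| ≤ L₁ + L₂ ∧
      c * D ≤ |t / ξ - (η₀ - t) / (ξ₀ - ξ)|} := by
    intro ξ t ht
    refine ⟨?_, ht.2⟩
    have harg : t ^ 2 / ξ + (η₀ - t) ^ 2 / (ξ₀ - ξ) -
        (τ₀ - ξ * |ξ| ^ α - (ξ₀ - ξ) * |ξ₀ - ξ| ^ α) =
        omegaKP α ξ t + omegaKP α (ξ₀ - ξ) (η₀ - t) - τ₀ := by
      simp only [omegaKP]; ring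
    rw [harg]
    exact ht.1
  have step2 : ∀ ξ : ℝ, (∫⁻ η, ∫⁻ τ, E.indicator 1 (τ, ξ, η)) ≤
      ENNReal.ofReal (2 * min L₁ L₂) * ENNReal.ofReal (4 * (L₁ + L₂) / (c * D)) *
        Kset.indicator 1 ξ := by
    intro ξ
    have hKne : (ENNReal.ofReal (2 * min L₁ L₂) * Kset.indicator 1 ξ : ℝ≥0∞) ≠ ⊤ := by
      apply ENNReal.mul_ne_top ENNReal.ofReal_ne_top
      by_cases h : ξ ∈ Kset <;> simp [h]
    calc (∫⁻ η, ∫⁻ τ, E.indicator 1 (τ, ξ, η))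
        ≤ ∫⁻ η, ENNReal.ofReal (2 * min L₁ L₂) * Kset.indicator 1 ξ *
            (Sset ξ).indicator 1 η := lintegral_mono (fun η => step1 ξ η)
      _ = ENNReal.ofReal (2 * min L₁ L₂) * Kset.indicator 1 ξ *
            ∫⁻ η, (Sset ξ).indicator 1 η := lintegral_const_mul' _ _ hKne
      _ ≤ ENNReal.ofReal (2 * min L₁ L₂) * Kset.indicator 1 ξ * volume (Sset ξ) := by
          gcongr
          exact lintegral_indicator_one_le _
      _ ≤ ENNReal.ofReal (2 * min L₁ L₂) * Kset.indicator 1 ξ *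
            ENNReal.ofReal (4 * (L₁ + L₂) / (c * D)) := by
          gcongr
          exact (measure_mono (hSsub ξ)).trans
            (slice_vol_bound ξ (ξ₀ - ξ) η₀ _ (L₁ + L₂) (c * D) (by positivity)
              (by positivity))
      _ = ENNReal.ofReal (2 * min L₁ L₂) * ENNReal.ofReal (4 * (L₁ + L₂) / (c * D)) *
            Kset.indicator 1 ξ := by ring
  -- Fubini
  have hmeasInd : Measurable (E.indicator (1 : ℝ × ℝ × ℝ → ℝ≥0∞)) :=
    measurable_one.indicator hE
  have heq : volume E = ∫⁻ ξ, ∫⁻ η, ∫⁻ τ, E.indicator 1 (τ, ξ, η) := by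
    rw [← lintegral_indicator_one hE]
    rw [MeasureTheory.Measure.volume_eq_prod, lintegral_prod _ hmeasInd.aemeasurable]
    rw [lintegral_lintegral_swap (μ := (volume : Measure ℝ)) (ν := (volume : Measure (ℝ × ℝ)))
      (f := fun τ (q : ℝ × ℝ) => E.indicator 1 (τ, q)) hmeasInd.aemeasurable]
    have hinner : Measurable (fun q : ℝ × ℝ => ∫⁻ τ, E.indicator 1 (τ, q)) :=
      Measurable.lintegral_prod_left (f := fun τ (q : ℝ × ℝ) => E.indicator 1 (τ, q)) hmeasInd
    rw [MeasureTheory.Measure.volume_eq_prod, lintegral_prod _ hinner.aemeasurable]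
  rw [heq]
  calc (∫⁻ ξ, ∫⁻ η, ∫⁻ τ, E.indicator 1 (τ, ξ, η))
      ≤ ∫⁻ ξ, ENNReal.ofReal (2 * min L₁ L₂) * ENNReal.ofReal (4 * (L₁ + L₂) / (c * D)) *
          Kset.indicator 1 ξ := lintegral_mono step2
    _ = ENNReal.ofReal (2 * min L₁ L₂) * ENNReal.ofReal (4 * (L₁ + L₂) / (c * D)) *
          ∫⁻ ξ, Kset.indicator 1 ξ :=
        lintegral_const_mul' _ _ (ENNReal.mul_ne_top ENNReal.ofReal_ne_top ENNReal.ofReal_ne_top)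
    _ = ENNReal.ofReal (2 * min L₁ L₂) * ENNReal.ofReal (4 * (L₁ + L₂) / (c * D)) *
          volume Kset := by rw [lintegral_indicator_one measurableSet_Icc]
    _ = ENNReal.ofReal (2 * min L₁ L₂) * ENNReal.ofReal (4 * (L₁ + L₂) / (c * D)) *
          ENNReal.ofReal Nmin := by rw [Real.volume_Icc]; congr 2; ring

/-- Bilinear Strichartz estimate for the KP-I dispersion on `ℝ²` (Proposition 4.1):
under localization of the `ξ`-supports to intervals of length at most `N_min`,
group-velocity separation `|η₁/ξ₁ − η₂/ξ₂| ≥ c D`, and modulation localization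
`|τ − ω_α(ξ,η)| ≤ L_i`, the convolution obeys
`‖f₁ ∗ f₂‖_{L²} ≤ C N_min^{1/2} L_min^{1/2} (L_max/D)^{1/2} ‖f₁‖_{L²} ‖f₂‖_{L²}`. -/
theorem bilinear_strichartz (α c : ℝ) (hc : 0 < c) :
    ∃ C > (0 : ℝ), ∀ (f₁ f₂ : ℝ × ℝ × ℝ → ℝ) (I₁ I₂ : Set ℝ) (Nmin D L₁ L₂ : ℝ),
      0 < Nmin → 0 < D → 0 < L₁ → 0 < L₂ →
      Measurable f₁ → Measurable f₂ →
      (∀ x, 0 ≤ f₁ x) → (∀ x, 0 ≤ f₂ x) →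
      MemLp f₁ 2 volume → MemLp f₂ 2 volume →
      (∃ a₁, I₁ ⊆ Set.Icc a₁ (a₁ + Nmin)) →
      (∃ a₂, I₂ ⊆ Set.Icc a₂ (a₂ + Nmin)) →
      (∀ p ∈ Function.support f₁, p.2.1 ∈ I₁) →
      (∀ p ∈ Function.support f₂, p.2.1 ∈ I₂) →
      (∀ p ∈ Function.support f₁, ∀ q ∈ Function.support f₂,
        c * D ≤ |p.2.2 / p.2.1 - q.2.2 / q.2.1|) →
      (∀ p ∈ Function.support f₁, |p.1 - omegaKP α p.2.1 p.2.2| ≤ L₁) →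
      (∀ p ∈ Function.support f₂, |p.1 - omegaKP α p.2.1 p.2.2| ≤ L₂) →
      eLpNorm (conv3 f₁ f₂) 2 volume ≤
        ENNReal.ofReal (C * Nmin ^ ((1 : ℝ) / 2) * (min L₁ L₂) ^ ((1 : ℝ) / 2) *
            (max L₁ L₂ / D) ^ ((1 : ℝ) / 2)) *
          eLpNorm f₁ 2 volume * eLpNorm f₂ 2 volume := by
  refine ⟨4 / Real.sqrt c, div_pos (by norm_num) (Real.sqrt_pos.mpr hc), ?_⟩
  intro f₁ f₂ I₁ I₂ Nmin D L₁ L₂ hN hD hL₁ hL₂ hm₁ hm₂ hf₁ hf₂ _ _ hIa _ hsupp₁ hsupp₂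
    hsep hmod₁ hmod₂
  obtain ⟨a₁, ha₁⟩ := hIa
  set F : ℝ × ℝ × ℝ → ℝ≥0∞ := fun y => ENNReal.ofReal (f₁ y) with hFdef
  set G : ℝ × ℝ × ℝ → ℝ≥0∞ := fun y => ENNReal.ofReal (f₂ y) with hGdef
  have hFm : Measurable F := ENNReal.measurable_ofReal.comp hm₁
  have hGm : Measurable G := ENNReal.measurable_ofReal.comp hm₂
  set Breal : ℝ := 2 * min L₁ L₂ * (4 * (L₁ + L₂) / (c * D)) * Nmin with hBdef
  have hBnn : 0 ≤ Breal := by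
    have hmin : 0 < min L₁ L₂ := lt_min hL₁ hL₂
    rw [hBdef]
    exact mul_nonneg (mul_nonneg (by linarith) (div_nonneg (by linarith) (by positivity))) hN.le
  have hvol : ∀ x : ℝ × ℝ × ℝ, volume {y : ℝ × ℝ × ℝ | f₁ y ≠ 0 ∧ f₂ (x - y) ≠ 0} ≤
      ENNReal.ofReal Breal := by
    intro x
    refine (vol_E_bound α c f₁ f₂ I₁ Nmin D L₁ L₂ a₁ hc hD hL₁ hL₂ hm₁ hm₂ ha₁ hsupp₁
      hsep hmod₁ hmod₂ x).trans ?_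
    have hmin : 0 < min L₁ L₂ := lt_min hL₁ hL₂
    rw [← ENNReal.ofReal_mul (by positivity), ← ENNReal.ofReal_mul (by positivity)]
  -- pointwise bound on the convolution
  have hptA : ∀ x : ℝ × ℝ × ℝ, (‖conv3 f₁ f₂ x‖₊ : ℝ≥0∞) ≤ ∫⁻ y, F y * G (x - y) := by
    intro x
    refine (enorm_integral_le_lintegral_enorm _).trans_eq ?_
    refine lintegral_congr fun y => ?_
    rw [Real.enorm_eq_ofReal (mul_nonneg (hf₁ y) (hf₂ _)), ENNReal.ofReal_mul (hf₁ y)]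
  -- Cauchy-Schwarz
  have hCS : ∀ x : ℝ × ℝ × ℝ, (∫⁻ y, F y * G (x - y)) ^ (2 : ℝ) ≤
      ENNReal.ofReal Breal * ∫⁻ y, F y ^ (2 : ℝ) * G (x - y) ^ (2 : ℝ) := by
    intro x
    set Ex := {y : ℝ × ℝ × ℝ | f₁ y ≠ 0 ∧ f₂ (x - y) ≠ 0} with hExdef
    have hEx : MeasurableSet Ex := by
      have h1 : MeasurableSet {y : ℝ × ℝ × ℝ | f₁ y ≠ 0} :=
        hm₁ (measurableSet_singleton 0).compl
      have h2 : MeasurableSet {y : ℝ × ℝ × ℝ | f₂ (x - y) ≠ 0} :=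
        (hm₂.comp (measurable_const.sub measurable_id)) (measurableSet_singleton 0).compl
      exact h1.inter h2
    have hrw : (∫⁻ y, F y * G (x - y)) =
        ∫⁻ y, Ex.indicator 1 y * (F y * G (x - y)) := by
      refine lintegral_congr fun y => ?_
      by_cases hy : y ∈ Ex
      · rw [Set.indicator_of_mem hy]; simp
      · rw [Set.indicator_of_notMem hy]
        rw [hExdef] at hy
        simp only [Set.mem_setOf_eq, not_and_or, not_not] at hy
        rcases hy with h | h <;> simp [hFdef, hGdef, h]
    have hme1 : AEMeasurable (fun y => Ex.indicator (1 : ℝ × ℝ × ℝ → ℝ≥0∞) y) volume :=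
      (measurable_one.indicator hEx).aemeasurable
    have hme2 : AEMeasurable (fun y => F y * G (x - y)) volume :=
      (hFm.mul (hGm.comp (measurable_const.sub measurable_id))).aemeasurable
    have hHold := ENNReal.lintegral_mul_le_Lp_mul_Lq volume (p := 2) (q := 2)
      ⟨by norm_num, by norm_num, by norm_num⟩ hme1 hme2
    calc (∫⁻ y, F y * G (x - y)) ^ (2 : ℝ)
        = (∫⁻ y, Ex.indicator 1 y * (F y * G (x - y))) ^ (2 : ℝ) := by rw [hrw]
      _ ≤ ((∫⁻ y, Ex.indicator 1 y ^ (2 : ℝ)) ^ (1 / (2 : ℝ)) *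
            (∫⁻ y, (F y * G (x - y)) ^ (2 : ℝ)) ^ (1 / (2 : ℝ))) ^ (2 : ℝ) :=
          ENNReal.rpow_le_rpow hHold (by norm_num)
      _ = (∫⁻ y, Ex.indicator 1 y ^ (2 : ℝ)) * ∫⁻ y, (F y * G (x - y)) ^ (2 : ℝ) := by
          rw [ENNReal.mul_rpow_of_nonneg _ _ (by norm_num : (0 : ℝ) ≤ 2),
            ← ENNReal.rpow_mul, ← ENNReal.rpow_mul]
          norm_num
      _ = volume Ex * ∫⁻ y, (F y * G (x - y)) ^ (2 : ℝ) := by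
          congr 1
          have hind : ∀ y, Ex.indicator (1 : ℝ × ℝ × ℝ → ℝ≥0∞) y ^ (2 : ℝ) =
              Ex.indicator 1 y := by
            intro y
            by_cases hy : y ∈ Ex <;>
              simp [hy, ENNReal.zero_rpow_of_pos (by norm_num : (0 : ℝ) < 2)]
          rw [lintegral_congr hind, lintegral_indicator_one hEx]
      _ ≤ ENNReal.ofReal Breal * ∫⁻ y, F y ^ (2 : ℝ) * G (x - y) ^ (2 : ℝ) := by
          refine mul_le_mul' (hvol x) (le_of_eq (lintegral_congr fun y => ?_))
          rw [ENNReal.mul_rpow_of_nonneg _ _ (by norm_num : (0 : ℝ) ≤ 2)]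
  -- product structure of the double integral
  haveI hinv2 : (volume : Measure (ℝ × ℝ)).IsAddRightInvariant := by
    rw [MeasureTheory.Measure.volume_eq_prod]; infer_instance
  haveI hinv3 : (volume : Measure (ℝ × ℝ × ℝ)).IsAddRightInvariant := by
    rw [MeasureTheory.Measure.volume_eq_prod]; infer_instance
  have hprod : (∫⁻ x : ℝ × ℝ × ℝ, ∫⁻ y, F y ^ (2 : ℝ) * G (x - y) ^ (2 : ℝ)) =
      (∫⁻ y, F y ^ (2 : ℝ)) * ∫⁻ z, G z ^ (2 : ℝ) := by
    have hum : Measurable (Function.uncurry fun x y : ℝ × ℝ × ℝ =>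
        F y ^ (2 : ℝ) * G (x - y) ^ (2 : ℝ)) := by
      apply Measurable.mul
      · exact ENNReal.continuous_rpow_const.measurable.comp (hFm.comp measurable_snd)
      · exact ENNReal.continuous_rpow_const.measurable.comp
          (hGm.comp (measurable_fst.sub measurable_snd))
    calc (∫⁻ x : ℝ × ℝ × ℝ, ∫⁻ y, F y ^ (2 : ℝ) * G (x - y) ^ (2 : ℝ))
        = ∫⁻ y : ℝ × ℝ × ℝ, ∫⁻ x, F y ^ (2 : ℝ) * G (x - y) ^ (2 : ℝ) :=
          lintegral_lintegral_swap hum.aemeasurable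
      _ = ∫⁻ y : ℝ × ℝ × ℝ, F y ^ (2 : ℝ) * ∫⁻ x, G (x - y) ^ (2 : ℝ) :=
          lintegral_congr fun y => lintegral_const_mul _
            (ENNReal.continuous_rpow_const.measurable.comp
              (hGm.comp (measurable_id.sub measurable_const)))
      _ = ∫⁻ y : ℝ × ℝ × ℝ, F y ^ (2 : ℝ) * ∫⁻ z, G z ^ (2 : ℝ) := by
          refine lintegral_congr fun y => ?_
          congr 1
          calc (∫⁻ x, G (x - y) ^ (2 : ℝ)) = ∫⁻ x, (fun z => G z ^ (2 : ℝ)) (x + -y) := by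
                simp [sub_eq_add_neg]
            _ = ∫⁻ z, G z ^ (2 : ℝ) := lintegral_add_right_eq_self (μ := volume) (fun z => G z ^ (2 : ℝ)) (-y)
      _ = (∫⁻ y, F y ^ (2 : ℝ)) * ∫⁻ z, G z ^ (2 : ℝ) :=
          lintegral_mul_const _ (ENNReal.continuous_rpow_const.measurable.comp hFm)
  -- assemble
  have heLp1 : eLpNorm f₁ 2 volume = (∫⁻ y, F y ^ (2 : ℝ)) ^ (1 / (2 : ℝ)) := by
    rw [eLpNorm_eq_lintegral_rpow_enorm_toReal two_ne_zero ENNReal.ofNat_ne_top]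
    simp only [ENNReal.toReal_ofNat]
    congr 1
    refine lintegral_congr fun y => ?_
    rw [Real.enorm_eq_ofReal (hf₁ y)]
  have heLp2 : eLpNorm f₂ 2 volume = (∫⁻ z, G z ^ (2 : ℝ)) ^ (1 / (2 : ℝ)) := by
    rw [eLpNorm_eq_lintegral_rpow_enorm_toReal two_ne_zero ENNReal.ofNat_ne_top]
    simp only [ENNReal.toReal_ofNat]
    congr 1
    refine lintegral_congr fun z => ?_
    rw [Real.enorm_eq_ofReal (hf₂ z)]
  have hmain : eLpNorm (conv3 f₁ f₂) 2 volume ≤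
      ENNReal.ofReal Breal ^ (1 / (2 : ℝ)) * eLpNorm f₁ 2 volume * eLpNorm f₂ 2 volume := by
    rw [eLpNorm_eq_lintegral_rpow_enorm_toReal two_ne_zero ENNReal.ofNat_ne_top]
    simp only [ENNReal.toReal_ofNat]
    rw [heLp1, heLp2]
    calc (∫⁻ x, (‖conv3 f₁ f₂ x‖₊ : ℝ≥0∞) ^ (2 : ℝ)) ^ (1 / (2 : ℝ))
        ≤ (ENNReal.ofReal Breal * ((∫⁻ y, F y ^ (2 : ℝ)) * ∫⁻ z, G z ^ (2 : ℝ))) ^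
            (1 / (2 : ℝ)) := by
          refine ENNReal.rpow_le_rpow ?_ (by norm_num)
          rw [← hprod, ← lintegral_const_mul' _ _ ENNReal.ofReal_ne_top]
          refine lintegral_mono fun x => ?_
          exact (ENNReal.rpow_le_rpow (hptA x) (by norm_num : (0 : ℝ) ≤ 2)).trans (hCS x)
      _ = ENNReal.ofReal Breal ^ (1 / (2 : ℝ)) * ((∫⁻ y, F y ^ (2 : ℝ)) ^ (1 / (2 : ℝ)) *
            (∫⁻ z, G z ^ (2 : ℝ)) ^ (1 / (2 : ℝ))) := by
          rw [ENNReal.mul_rpow_of_nonneg _ _ (by norm_num : (0 : ℝ) ≤ 1 / 2),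
            ENNReal.mul_rpow_of_nonneg _ _ (by norm_num : (0 : ℝ) ≤ 1 / 2)]
      _ = _ := by ring
  refine hmain.trans ?_
  have hmin : 0 < min L₁ L₂ := lt_min hL₁ hL₂
  have hmax : 0 < max L₁ L₂ := lt_max_of_lt_left hL₁
  have hfinal : ENNReal.ofReal Breal ^ (1 / (2 : ℝ)) ≤
      ENNReal.ofReal (4 / Real.sqrt c * Nmin ^ ((1 : ℝ) / 2) * (min L₁ L₂) ^ ((1 : ℝ) / 2) *
        (max L₁ L₂ / D) ^ ((1 : ℝ) / 2)) := by
    rw [ENNReal.ofReal_rpow_of_nonneg hBnn (by norm_num : (0 : ℝ) ≤ 1 / 2)]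
    apply ENNReal.ofReal_le_ofReal
    have hBR : Breal ≤ 16 / c * (Nmin * (min L₁ L₂ * (max L₁ L₂ / D))) := by
      have h12 : L₁ + L₂ ≤ 2 * max L₁ L₂ := by
        have h1 := le_max_left L₁ L₂
        have h2 := le_max_right L₁ L₂
        linarith
      have key : Breal ≤ 2 * min L₁ L₂ * (4 * (2 * max L₁ L₂) / (c * D)) * Nmin := by
        rw [hBdef]
        gcongr
      refine key.trans (le_of_eq ?_)
      have hmm : (L₁ ⊓ L₂) * (L₁ ⊔ L₂) = L₁ * L₂ := min_mul_max L₁ L₂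
      field_simp
      ring
    calc Breal ^ ((1 : ℝ) / 2)
        ≤ (16 / c * (Nmin * (min L₁ L₂ * (max L₁ L₂ / D)))) ^ ((1 : ℝ) / 2) :=
          Real.rpow_le_rpow hBnn hBR (by norm_num)
      _ = (16 / c) ^ ((1 : ℝ) / 2) * (Nmin ^ ((1 : ℝ) / 2) *
            ((min L₁ L₂) ^ ((1 : ℝ) / 2) * (max L₁ L₂ / D) ^ ((1 : ℝ) / 2))) := by
          rw [Real.mul_rpow (by positivity) (mul_nonneg hN.le (mul_nonneg hmin.le
              (div_nonneg hmax.le hD.le))),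
            Real.mul_rpow hN.le (mul_nonneg hmin.le (div_nonneg hmax.le hD.le)),
            Real.mul_rpow hmin.le (div_nonneg hmax.le hD.le)]
      _ = 4 / Real.sqrt c * Nmin ^ ((1 : ℝ) / 2) * (min L₁ L₂) ^ ((1 : ℝ) / 2) *
            (max L₁ L₂ / D) ^ ((1 : ℝ) / 2) := by
          have h16 : ((16 : ℝ) / c) ^ ((1 : ℝ) / 2) = 4 / Real.sqrt c := by
            rw [← Real.sqrt_eq_rpow, Real.sqrt_div (by norm_num : (0 : ℝ) ≤ 16),
              show (16 : ℝ) = 4 ^ 2 by norm_num, Real.sqrt_sq (by norm_num : (0 : ℝ) ≤ 4)]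
          rw [h16]
          ring
  exact mul_le_mul' (mul_le_mul' hfinal le_rfl) le_rfl
end

section
/- Let α ≥ 1 and suppose ξ₁ ∈ [γ, 2γ], η₁ = 0, ξ₂ ∈ [N − γ, N], with N ≫ 1, γ ≪ 1, and η₂² = ((α+1)ξ_*^α − ξ₁^α) ξ₂(ξ₁^* + ξ₂) for appropriate points ξ₁^* ∈ [γ,2γ], ξ_* ∈ (ξ₂, ξ₂ + ξ₁^*). Then the KP-I resonance function satisfies |Ω_α(ξ₁,0,ξ₂,η₂)| ≤ C N^{α−1} γ², i.e., the resonance can be made as small as N^{α−1}γ² by choosing the transverse frequency η₂ to cancel the KdV resonance to leading order. -/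
open Real Set
set_option maxHeartbeats 1000000

lemma mvt_rpow (p : ℝ) {a b : ℝ} (ha : 0 < a) (hab : a ≤ b) :
    ∃ c ∈ Set.Icc a b, b ^ p - a ^ p = p * c ^ (p - 1) * (b - a) := by
  rcases eq_or_lt_of_le hab with rfl | hlt
  · exact ⟨a, ⟨le_rfl, le_rfl⟩, by ring⟩
  · have hcont : ContinuousOn (fun x : ℝ => x ^ p) (Set.Icc a b) := by
      intro x hx
      exact (Real.continuousAt_rpow_const x p (Or.inl (ha.trans_le hx.1).ne')).continuousWithinAt
    have hderiv : ∀ x ∈ Set.Ioo a b, HasDerivAt (fun x : ℝ => x ^ p) (p * x ^ (p - 1)) x := by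
      intro x hx
      exact Real.hasDerivAt_rpow_const (Or.inl (ha.trans hx.1).ne')
    obtain ⟨c, hc, h⟩ := exists_hasDerivAt_eq_slope (fun x : ℝ => x ^ p) _ hlt hcont hderiv
    refine ⟨c, ⟨hc.1.le, hc.2.le⟩, ?_⟩
    rw [eq_div_iff (sub_ne_zero.mpr hlt.ne')] at h
    linarith

lemma rpow_diff_le {p M x y : ℝ} (hp : 1 ≤ p) (hx : 0 < x) (hy : 0 < y)
    (hxM : x ≤ M) (hyM : y ≤ M) :
    |x ^ p - y ^ p| ≤ p * M ^ (p - 1) * |x - y| := by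
  wlog hxy : y ≤ x generalizing x y
  · rw [abs_sub_comm, abs_sub_comm x y]; exact this hy hx hyM hxM (le_of_not_ge hxy)
  obtain ⟨c, hc, hmvt⟩ := mvt_rpow p hy hxy
  have hc0 : 0 < c := lt_of_lt_of_le hy hc.1
  have h1 : c ^ (p - 1) ≤ M ^ (p - 1) :=
    Real.rpow_le_rpow hc0.le (hc.2.trans hxM) (by linarith)
  have h2 : y ^ p ≤ x ^ p := Real.rpow_le_rpow hy.le hxy (by linarith)
  rw [abs_of_nonneg (by linarith), abs_of_nonneg (by linarith)]
  rw [hmvt]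
  have hp0 : (0:ℝ) ≤ p := by linarith
  exact mul_le_mul_of_nonneg_right (mul_le_mul_of_nonneg_left h1 hp0) (by linarith)

/-- Smallness of the KP-I resonance under the tuned choice of the transverse frequency
`η₂` (Taylor-remainder bound from the C² ill-posedness construction on ℝ × 𝕋):
with `ξ₁, ξ₁* ∈ [γ,2γ]`, `ξ₂ ∈ [N−γ,N]`, `ξ* ∈ (ξ₂, ξ₂+ξ₁*)` and
`η₂² = ((α+1)ξ*^α − ξ₁^α) ξ₂(ξ₁*+ξ₂)`, one has `|Ω_α(ξ₁,0,ξ₂,η₂)| ≤ C N^{α−1} γ²`. -/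
theorem resonance_smallness (α : ℝ) (hα : 1 ≤ α) :
    ∃ C > (0 : ℝ), ∀ N γ ξ₁ ξ₂ ξ₁s ξs η₂ : ℝ,
      2 ≤ N → 0 < γ → γ ≤ 1 →
      ξ₁ ∈ Set.Icc γ (2 * γ) → ξ₁s ∈ Set.Icc γ (2 * γ) →
      ξ₂ ∈ Set.Icc (N - γ) N →
      ξs ∈ Set.Ioo ξ₂ (ξ₂ + ξ₁s) →
      η₂ ^ 2 = ((α + 1) * ξs ^ α - ξ₁ ^ α) * ξ₂ * (ξ₁s + ξ₂) →
      |(ξ₁ + ξ₂) ^ (α + 1) - ξ₁ ^ (α + 1) - ξ₂ ^ (α + 1) -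
          (0 * ξ₂ - η₂ * ξ₁) ^ 2 / (ξ₁ * ξ₂ * (ξ₁ + ξ₂))| ≤
        C * N ^ (α - 1) * γ ^ 2 := by
  have h2a1 : (0:ℝ) < 2 ^ (α - 1) := Real.rpow_pos_of_pos two_pos _
  have h2a : (0:ℝ) < 2 ^ α := Real.rpow_pos_of_pos two_pos _
  have h2a2 : (0:ℝ) < 2 ^ (α + 2) := Real.rpow_pos_of_pos two_pos _
  have hα0 : (0:ℝ) < α := lt_of_lt_of_le one_pos hα
  have hCpos : (0:ℝ) < 4*α*(α+1)*2^(α-1) + 4*(α+1)*2^α + 2^(α+2) := by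
    have t1 : (0:ℝ) < 4*α*(α+1)*2^(α-1) :=
      mul_pos (mul_pos (mul_pos (by norm_num) hα0) (by linarith)) h2a1
    have t2 : (0:ℝ) < 4*(α+1)*2^α := mul_pos (by linarith) h2a
    linarith
  refine ⟨4*α*(α+1)*2^(α-1) + 4*(α+1)*2^α + 2^(α+2), hCpos, ?_⟩
  intro N γ ξ₁ ξ₂ ξ₁s ξs η₂ hN hγ0 hγ1 hξ₁ hξ₁s hξ₂ hξs hη
  obtain ⟨h1l, h1u⟩ := hξ₁
  obtain ⟨h1sl, h1su⟩ := hξ₁s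
  obtain ⟨h2l, h2u⟩ := hξ₂
  obtain ⟨hsl, hsu⟩ := hξs
  have hξ₁0 : 0 < ξ₁ := lt_of_lt_of_le hγ0 h1l
  have hξ₂0 : (0:ℝ) < ξ₂ := by linarith
  have hP0 : 0 < ξ₁ + ξ₂ := by linarith
  have hξs0 : 0 < ξs := lt_trans hξ₂0 hsl
  have hN0 : (0:ℝ) < N := by linarith
  -- MVT point for (ξ₂+ξ₁)^(α+1) - ξ₂^(α+1)
  obtain ⟨c, hc, hA⟩ := mvt_rpow (α + 1) hξ₂0 (by linarith : ξ₂ ≤ ξ₂ + ξ₁)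
  rw [show α + 1 - 1 = α by ring, show ξ₂ + ξ₁ - ξ₂ = ξ₁ by ring] at hA
  have hc0 : 0 < c := lt_of_lt_of_le hξ₂0 hc.1
  have hcu : c ≤ ξ₂ + ξ₁ := hc.2
  have hcl : ξ₂ ≤ c := hc.1
  -- bounds with M := ξ₂ + 2γ
  have hcM : c ≤ ξ₂ + 2 * γ := by linarith
  have hsM : ξs ≤ ξ₂ + 2 * γ := by linarith
  have hM2N : ξ₂ + 2 * γ ≤ 2 * N := by linarith
  have hM0 : (0:ℝ) < ξ₂ + 2 * γ := by linarith
  -- key identity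
  have hξ₁α : ξ₁ ^ (α + 1) = ξ₁ ^ α * ξ₁ := Real.rpow_add_one hξ₁0.ne' α
  have key : (ξ₁ + ξ₂) ^ (α + 1) - ξ₁ ^ (α + 1) - ξ₂ ^ (α + 1) -
        (0 * ξ₂ - η₂ * ξ₁) ^ 2 / (ξ₁ * ξ₂ * (ξ₁ + ξ₂)) =
      (α + 1) * ξ₁ * (c ^ α - ξs ^ α) +
        ((α + 1) * ξ₁ * ξs ^ α - ξ₁ ^ (α + 1)) * ((ξ₁ - ξ₁s) / (ξ₁ + ξ₂)) := by
    have hPcomm : (ξ₁ + ξ₂) ^ (α + 1) = ξ₂ ^ (α+1) + (α + 1) * c ^ α * ξ₁ := by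
      rw [show ξ₁ + ξ₂ = ξ₂ + ξ₁ by ring]; linarith
    rw [show (0 * ξ₂ - η₂ * ξ₁) ^ 2 = η₂ ^ 2 * ξ₁ ^ 2 from by ring, hη, hPcomm, hξ₁α]
    field_simp
    ring
  rw [key]
  -- bound first term
  have hcs : |c - ξs| ≤ 2 * γ := by
    rw [abs_le]; constructor <;> linarith
  have hMN1 : (ξ₂ + 2 * γ) ^ (α - 1) ≤ 2 ^ (α - 1) * N ^ (α - 1) := by
    calc (ξ₂ + 2 * γ) ^ (α - 1) ≤ (2 * N) ^ (α - 1) :=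
          Real.rpow_le_rpow hM0.le hM2N (by linarith)
      _ = 2 ^ (α - 1) * N ^ (α - 1) := Real.mul_rpow (by norm_num) hN0.le
  have hNa1 : 0 < N ^ (α - 1) := Real.rpow_pos_of_pos hN0 _
  have hdiff : |c ^ α - ξs ^ α| ≤ α * (ξ₂ + 2 * γ) ^ (α - 1) * |c - ξs| :=
    rpow_diff_le hα hc0 hξs0 hcM hsM
  have hT1 : |(α + 1) * ξ₁ * (c ^ α - ξs ^ α)| ≤
      4 * α * (α + 1) * 2 ^ (α - 1) * N ^ (α - 1) * γ ^ 2 := by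
    rw [abs_mul, abs_of_nonneg (by positivity : (0:ℝ) ≤ (α+1) * ξ₁)]
    have h1 : |c ^ α - ξs ^ α| ≤ α * (2 ^ (α - 1) * N ^ (α - 1)) * (2 * γ) := by
      calc |c ^ α - ξs ^ α| ≤ α * (ξ₂ + 2 * γ) ^ (α - 1) * |c - ξs| := hdiff
        _ ≤ α * (2 ^ (α - 1) * N ^ (α - 1)) * (2 * γ) := by
            exact mul_le_mul (mul_le_mul_of_nonneg_left hMN1 hα0.le) hcs (abs_nonneg _)
              (by positivity)
    calc (α + 1) * ξ₁ * |c ^ α - ξs ^ α|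
        ≤ ((α + 1) * (2 * γ)) * (α * (2 ^ (α - 1) * N ^ (α - 1)) * (2 * γ)) := by
          exact mul_le_mul (mul_le_mul_of_nonneg_left h1u (by linarith)) h1 (abs_nonneg _)
            (by positivity)
      _ = 4 * α * (α + 1) * 2 ^ (α - 1) * N ^ (α - 1) * γ ^ 2 := by ring
  -- second term ingredients
  have hNα : 0 < N ^ α := Real.rpow_pos_of_pos hN0 α
  have h2p1 : (0:ℝ) < 2 ^ (α + 1) := Real.rpow_pos_of_pos two_pos _
  have hsα : ξs ^ α ≤ 2 ^ α * N ^ α := by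
    calc ξs ^ α ≤ (2 * N) ^ α := Real.rpow_le_rpow hξs0.le (hsM.trans hM2N) (by linarith)
      _ = 2 ^ α * N ^ α := Real.mul_rpow (by norm_num) hN0.le
  have hξ₁a1 : ξ₁ ^ (α + 1) ≤ 2 ^ (α + 1) * γ ^ 2 := by
    calc ξ₁ ^ (α + 1) ≤ (2 * γ) ^ (α + 1) :=
          Real.rpow_le_rpow hξ₁0.le h1u (by linarith)
      _ = 2 ^ (α + 1) * γ ^ (α + 1) := Real.mul_rpow (by norm_num) hγ0.le
      _ ≤ 2 ^ (α + 1) * γ ^ 2 := by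
          have hg : γ ^ (α + 1) ≤ γ ^ ((2:ℕ):ℝ) := by
            apply Real.rpow_le_rpow_of_exponent_ge hγ0 hγ1
            push_cast; linarith
          rw [Real.rpow_natCast] at hg
          exact mul_le_mul_of_nonneg_left hg h2p1.le
  have hY : |(ξ₁ - ξ₁s) / (ξ₁ + ξ₂)| ≤ 2 * γ / N := by
    rw [abs_div, abs_of_pos hP0]
    have h11 : |ξ₁ - ξ₁s| ≤ γ := by rw [abs_le]; constructor <;> linarith
    calc |ξ₁ - ξ₁s| / (ξ₁ + ξ₂) ≤ γ / (N / 2) :=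
          div_le_div₀ hγ0.le h11 (by linarith) (by linarith)
      _ = 2 * γ / N := by field_simp
  have hNone : (1:ℝ) ≤ N ^ (α - 1) := by
    have h := Real.rpow_le_rpow zero_le_one (by linarith : (1:ℝ) ≤ N) (by linarith : (0:ℝ) ≤ α - 1)
    rwa [Real.one_rpow] at h
  have hNsplit : N ^ α = N ^ (α - 1) * N := by
    rw [← Real.rpow_add_one hN0.ne' (α - 1)]; ring_nf
  have hT2 : |((α + 1) * ξ₁ * ξs ^ α - ξ₁ ^ (α + 1)) * ((ξ₁ - ξ₁s) / (ξ₁ + ξ₂))| ≤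
      (4 * (α + 1) * 2 ^ α + 2 ^ (α + 2)) * N ^ (α - 1) * γ ^ 2 := by
    rw [abs_mul]
    have hξ₁p : 0 < ξ₁ ^ (α + 1) := Real.rpow_pos_of_pos hξ₁0 _
    have hsp : 0 < ξs ^ α := Real.rpow_pos_of_pos hξs0 _
    have hprod : (α + 1) * ξ₁ * ξs ^ α ≤ (α + 1) * (2 * γ) * (2 ^ α * N ^ α) := by
      have := mul_le_mul (mul_le_mul_of_nonneg_left h1u (by linarith : (0:ℝ) ≤ α + 1))
        hsα hsp.le (by positivity : (0:ℝ) ≤ (α + 1) * (2 * γ))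
      linarith
    have hprodnn : (0:ℝ) < (α + 1) * ξ₁ * ξs ^ α :=
      mul_pos (mul_pos (by linarith) hξ₁0) hsp
    have hX : |(α + 1) * ξ₁ * ξs ^ α - ξ₁ ^ (α + 1)| ≤
        (α + 1) * (2 * γ) * (2 ^ α * N ^ α) + 2 ^ (α + 1) * γ ^ 2 := by
      rw [abs_le]
      constructor <;> linarith
    have hXnn : (0:ℝ) ≤ (α + 1) * (2 * γ) * (2 ^ α * N ^ α) + 2 ^ (α + 1) * γ ^ 2 := by
      positivity
    have h22 : (2:ℝ) ^ (α + 2) = 2 ^ (α + 1) * 2 := by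
      rw [show α + 2 = α + 1 + 1 by ring, Real.rpow_add_one (by norm_num : (2:ℝ) ≠ 0)]
    calc |(α + 1) * ξ₁ * ξs ^ α - ξ₁ ^ (α + 1)| * |(ξ₁ - ξ₁s) / (ξ₁ + ξ₂)|
        ≤ ((α + 1) * (2 * γ) * (2 ^ α * N ^ α) + 2 ^ (α + 1) * γ ^ 2) * (2 * γ / N) :=
          mul_le_mul hX hY (abs_nonneg _) hXnn
      _ = 4 * (α + 1) * 2 ^ α * γ ^ 2 * (N ^ α / N) + 2 ^ (α + 2) * γ ^ 2 * (γ / N) := by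
          rw [h22]; field_simp; ring
      _ ≤ (4 * (α + 1) * 2 ^ α + 2 ^ (α + 2)) * N ^ (α - 1) * γ ^ 2 := by
          rw [hNsplit, mul_div_assoc, div_self hN0.ne', mul_one]
          have hγN : γ / N ≤ 1 := div_le_one_of_le₀ (by linarith) hN0.le
          have hc1 : 2 ^ (α + 2) * γ ^ 2 * (γ / N) ≤ 2 ^ (α + 2) * γ ^ 2 := by
            calc 2 ^ (α + 2) * γ ^ 2 * (γ / N) ≤ 2 ^ (α + 2) * γ ^ 2 * 1 :=
                  mul_le_mul_of_nonneg_left hγN (by positivity)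
              _ = 2 ^ (α + 2) * γ ^ 2 := by ring
          have hc2 : 2 ^ (α + 2) * γ ^ 2 ≤ 2 ^ (α + 2) * γ ^ 2 * N ^ (α - 1) :=
            le_mul_of_one_le_right (by positivity) hNone
          linarith
  calc |(α + 1) * ξ₁ * (c ^ α - ξs ^ α) +
        ((α + 1) * ξ₁ * ξs ^ α - ξ₁ ^ (α + 1)) * ((ξ₁ - ξ₁s) / (ξ₁ + ξ₂))|
      ≤ |(α + 1) * ξ₁ * (c ^ α - ξs ^ α)| +
        |((α + 1) * ξ₁ * ξs ^ α - ξ₁ ^ (α + 1)) * ((ξ₁ - ξ₁s) / (ξ₁ + ξ₂))| := abs_add_le _ _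
    _ ≤ 4 * α * (α + 1) * 2 ^ (α - 1) * N ^ (α - 1) * γ ^ 2 +
        (4 * (α + 1) * 2 ^ α + 2 ^ (α + 2)) * N ^ (α - 1) * γ ^ 2 := add_le_add hT1 hT2
    _ = (4*α*(α+1)*2^(α-1) + 4*(α+1)*2^α + 2^(α+2)) * N ^ (α - 1) * γ ^ 2 := by ring
end

section
/- Sharp lower bound exhibiting optimality of the torus Strichartz estimate: let û₀(ξ,η) = δ_{ξ,N} · 1_{[1,N^{1/2}]}(η) on ℤ × ℤ (a single x-frequency N and N^{1/2} consecutive y-frequencies). Then the free solution satisfies ‖S_α(t)u₀‖_{L⁴([0,1]×𝕋²)} ≳ N^{3/8} while ‖u₀‖_{L²(𝕋²)} ∼ N^{1/4}; hence the estimate ‖S_α(t)u₀‖_{L⁴_{t,x,y}([0,1]×𝕋²)} ≲ N^{1/8+ε}‖u₀‖_{L²} cannot hold with any exponent smaller than 1/8. -/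
open MeasureTheory

/-- The free evolution of the extremizing data `û₀(ξ,η) = δ_{ξ,N} 1_{[1,N^{1/2}]}(η)`
on the torus: a single `x`-frequency `N` and `⌊√N⌋` consecutive `y`-frequencies. -/
noncomputable def torusEx (α : ℝ) (N : ℕ) (t x y : ℝ) : ℂ :=
  ∑ η ∈ Finset.Icc 1 (Nat.floor (Real.sqrt N)),
    Complex.exp (Complex.I * ((N : ℝ) * x + (η : ℝ) * y + t * omegaKP α N η))

open Complex Real

section Aux

lemma torusEx_eq (α : ℝ) (N : ℕ) (t x y : ℝ) :
    torusEx α N t x y =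
      Complex.exp ((((N : ℝ) * x + t * ((N : ℝ) * |(N : ℝ)| ^ α) : ℝ)) * Complex.I) *
        ∑ η ∈ Finset.Icc 1 (Nat.floor (Real.sqrt N)),
          Complex.exp ((((η : ℝ) * y + t * ((η : ℝ) ^ 2 / N) : ℝ)) * Complex.I) := by
  rw [torusEx, Finset.mul_sum]
  refine Finset.sum_congr rfl fun η _ => ?_
  rw [← Complex.exp_add]
  congr 1
  simp only [omegaKP]
  push_cast
  ring

lemma torusEx_norm (α : ℝ) (N : ℕ) (t x y : ℝ) :
    ‖torusEx α N t x y‖ =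
      ‖∑ η ∈ Finset.Icc 1 (Nat.floor (Real.sqrt N)),
          Complex.exp ((((η : ℝ) * y + t * ((η : ℝ) ^ 2 / N) : ℝ)) * Complex.I)‖ := by
  rw [torusEx_eq, norm_mul, norm_exp_ofReal_mul_I, one_mul]

lemma torusEx_norm0 (α : ℝ) (N : ℕ) (x y : ℝ) :
    ‖torusEx α N 0 x y‖ =
      ‖∑ η ∈ Finset.Icc 1 (Nat.floor (Real.sqrt N)),
          Complex.exp (((η:ℝ)*y) * Complex.I)‖ := by
  rw [torusEx_norm]
  simp only [zero_mul, mul_zero, add_zero, Complex.ofReal_mul]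

lemma torusEx_cont (α : ℝ) (N : ℕ) :
    Continuous fun z : ℝ × ℝ × ℝ => torusEx α N z.1 z.2.1 z.2.2 := by
  unfold torusEx
  refine continuous_finset_sum _ fun η _ => ?_
  refine Complex.continuous_exp.comp (continuous_const.mul ?_)
  have h1 : Continuous fun z : ℝ × ℝ × ℝ => ((z.2.1 : ℂ)) :=
    Complex.continuous_ofReal.comp (continuous_fst.comp continuous_snd)
  have h2 : Continuous fun z : ℝ × ℝ × ℝ => ((z.2.2 : ℂ)) :=
    Complex.continuous_ofReal.comp (continuous_snd.comp continuous_snd)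
  have h3 : Continuous fun z : ℝ × ℝ × ℝ => ((z.1 : ℂ)) :=
    Complex.continuous_ofReal.comp continuous_fst
  exact ((continuous_const.mul h1).add (continuous_const.mul h2)).add (h3.mul continuous_const)

lemma torusEx_cont2 (α : ℝ) (N : ℕ) : Continuous fun z : ℝ × ℝ => torusEx α N 0 z.1 z.2 := by
  unfold torusEx
  refine continuous_finset_sum _ fun η _ => ?_
  refine Complex.continuous_exp.comp (continuous_const.mul ?_)
  have h1 : Continuous fun z : ℝ × ℝ => ((z.1 : ℂ)) :=
    Complex.continuous_ofReal.comp continuous_fst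
  have h2 : Continuous fun z : ℝ × ℝ => ((z.2 : ℂ)) :=
    Complex.continuous_ofReal.comp continuous_snd
  exact ((continuous_const.mul h1).add (continuous_const.mul h2)).add
    (continuous_const.mul continuous_const)

lemma exp_int_integral (a b : ℕ) :
    ∫ y in (0:ℝ)..(2*π), Complex.exp ((((a:ℝ) - b) * Complex.I) * y) =
      if a = b then ((2*π : ℝ) : ℂ) else 0 := by
  by_cases h : a = b
  · simp [h]
  · have hc : ((a:ℝ) - b : ℂ) * Complex.I ≠ 0 := by
      simp only [ne_eq, mul_eq_zero, Complex.I_ne_zero, or_false]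
      push_cast
      rw [sub_eq_zero]
      exact_mod_cast fun hh => h (Nat.cast_injective hh)
    rw [integral_exp_mul_complex hc]
    simp only [h, if_false]
    have h1 : (((a:ℝ) - b : ℂ) * Complex.I) * ((2*π : ℝ) : ℂ)
        = (((a:ℤ) - (b:ℤ) : ℤ) : ℂ) * (2*(π:ℂ)*Complex.I) := by push_cast; ring
    rw [h1, Complex.exp_int_mul_two_pi_mul_I]
    simp

lemma hre_sq (M : ℕ) (y : ℝ) :
    (‖∑ η ∈ Finset.Icc 1 M, Complex.exp (((η:ℝ)*y) * Complex.I)‖^2 : ℝ)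
      = (∑ a ∈ Finset.Icc 1 M, ∑ b ∈ Finset.Icc 1 M,
          Complex.exp ((((a:ℝ) - b) * Complex.I) * y)).re := by
  have h1 : ((∑ η ∈ Finset.Icc 1 M, Complex.exp (((η:ℝ)*y) * Complex.I)) *
      (starRingEnd ℂ) (∑ η ∈ Finset.Icc 1 M, Complex.exp (((η:ℝ)*y) * Complex.I))).re
      = ‖∑ η ∈ Finset.Icc 1 M, Complex.exp (((η:ℝ)*y) * Complex.I)‖^2 := by
    rw [Complex.mul_conj]
    simp [Complex.normSq_eq_norm_sq, ← Complex.ofReal_pow]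
  rw [← h1]
  congr 1
  rw [map_sum, Finset.sum_mul_sum]
  refine Finset.sum_congr rfl fun a _ => Finset.sum_congr rfl fun b _ => ?_
  rw [← Complex.exp_conj, ← Complex.exp_add]
  congr 1
  simp only [map_mul, Complex.conj_I, Complex.conj_ofReal]
  push_cast
  ring

lemma parseval (M : ℕ) :
    ∫ y in Set.Icc (0:ℝ) (2*π), ‖∑ η ∈ Finset.Icc 1 M, Complex.exp (((η:ℝ)*y) * Complex.I)‖^2
      = 2*π*M := by
  have hgc : ∀ (a b : ℕ), Continuous fun y : ℝ =>
      Complex.exp ((((a:ℝ) - b) * Complex.I) * (y:ℂ)) := by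
    intro a b; fun_prop
  have hg : Continuous fun y : ℝ => (∑ a ∈ Finset.Icc 1 M, ∑ b ∈ Finset.Icc 1 M,
      Complex.exp ((((a:ℝ) - b) * Complex.I) * (y:ℂ))) :=
    continuous_finset_sum _ fun a _ => continuous_finset_sum _ fun b _ => hgc a b
  have h0 : (0:ℝ) ≤ 2*π := by positivity
  calc ∫ y in Set.Icc (0:ℝ) (2*π), ‖∑ η ∈ Finset.Icc 1 M, Complex.exp (((η:ℝ)*y) * Complex.I)‖^2
      = ∫ y in Set.Icc (0:ℝ) (2*π), (∑ a ∈ Finset.Icc 1 M, ∑ b ∈ Finset.Icc 1 M,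
          Complex.exp ((((a:ℝ) - b) * Complex.I) * y)).re := by
        refine setIntegral_congr_fun measurableSet_Icc fun y _ => hre_sq M y
    _ = (∫ y in Set.Icc (0:ℝ) (2*π), ∑ a ∈ Finset.Icc 1 M, ∑ b ∈ Finset.Icc 1 M,
          Complex.exp ((((a:ℝ) - b) * Complex.I) * y)).re :=
        integral_re (hg.integrableOn_Icc)
    _ = (∫ y in (0:ℝ)..(2*π), ∑ a ∈ Finset.Icc 1 M, ∑ b ∈ Finset.Icc 1 M,
          Complex.exp ((((a:ℝ) - b) * Complex.I) * y)).re := by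
        rw [intervalIntegral.integral_of_le h0, integral_Icc_eq_integral_Ioc]
    _ = (∑ a ∈ Finset.Icc 1 M, ∑ b ∈ Finset.Icc 1 M,
          ∫ y in (0:ℝ)..(2*π), Complex.exp ((((a:ℝ) - b) * Complex.I) * y)).re := by
        rw [intervalIntegral.integral_finset_sum]
        · congr 1
          refine Finset.sum_congr rfl fun a _ => ?_
          rw [intervalIntegral.integral_finset_sum]
          intro b _; exact (hgc a b).intervalIntegrable _ _
        · intro a _
          exact (continuous_finset_sum _ fun b _ => hgc a b).intervalIntegrable _ _
    _ = 2*π*M := by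
        have : ∀ a ∈ Finset.Icc 1 M, ∑ b ∈ Finset.Icc 1 M,
            (∫ y in (0:ℝ)..(2*π), Complex.exp ((((a:ℝ) - b) * Complex.I) * y))
            = ((2*π:ℝ):ℂ) := by
          intro a ha
          have h2 : ∀ b ∈ Finset.Icc 1 M, (∫ y in (0:ℝ)..(2*π),
              Complex.exp ((((a:ℝ) - b) * Complex.I) * y))
              = if b = a then ((2*π:ℝ):ℂ) else 0 := by
            intro b _; rw [exp_int_integral]; simp [eq_comm]
          rw [Finset.sum_congr rfl h2, Finset.sum_ite_eq' _ a _]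
          simp [ha]
        rw [Finset.sum_congr rfl this]
        simp [mul_comm]

lemma eLpNorm2_eq (α : ℝ) (N : ℕ) :
    eLpNorm (fun z : ℝ × ℝ => torusEx α N 0 z.1 z.2) 2
        (volume.restrict (Set.Icc (0:ℝ) (2*π) ×ˢ Set.Icc (0:ℝ) (2*π)))
      = ENNReal.ofReal (2*π*Real.sqrt (Nat.floor (Real.sqrt N))) := by
  set M := Nat.floor (Real.sqrt N) with hM
  set f : ℝ → ℂ := fun y => ∑ η ∈ Finset.Icc 1 M, Complex.exp (((η:ℝ)*y) * Complex.I) with hf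
  have hfc : Continuous f := by
    refine continuous_finset_sum _ fun η _ => ?_
    exact Complex.continuous_exp.comp (by fun_prop)
  rw [eLpNorm_eq_lintegral_rpow_enorm_toReal (by norm_num) (by norm_num)]; simp_rw [enorm_eq_nnnorm]
  have htr : ENNReal.toReal 2 = 2 := by norm_num
  rw [htr]
  have hmeas : (volume : Measure (ℝ × ℝ)).restrict (Set.Icc (0:ℝ) (2*π) ×ˢ Set.Icc (0:ℝ) (2*π))
      = (volume.restrict (Set.Icc (0:ℝ) (2*π))).prod (volume.restrict (Set.Icc (0:ℝ) (2*π))) := by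
    rw [MeasureTheory.Measure.volume_eq_prod, Measure.prod_restrict]
  rw [hmeas]
  have hae : AEMeasurable (fun z : ℝ × ℝ => ((‖torusEx α N 0 z.1 z.2‖₊ : ENNReal)) ^ (2:ℝ))
      ((volume.restrict (Set.Icc (0:ℝ) (2*π))).prod (volume.restrict (Set.Icc (0:ℝ) (2*π)))) :=
    ((torusEx_cont2 α N).measurable.enorm.pow_const _).aemeasurable
  rw [MeasureTheory.lintegral_prod _ hae]
  have hinner : ∀ x : ℝ, ∫⁻ y in Set.Icc (0:ℝ) (2*π), ((‖torusEx α N 0 x y‖₊ : ENNReal)) ^ (2:ℝ)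
      = ENNReal.ofReal (2*π*M) := by
    intro x
    have h1 : ∀ y : ℝ, ((‖torusEx α N 0 x y‖₊ : ENNReal)) ^ (2:ℝ)
        = ENNReal.ofReal (‖f y‖^2) := by
      intro y
      rw [← enorm_eq_nnnorm, ← ofReal_norm, ENNReal.ofReal_rpow_of_nonneg (norm_nonneg _) (by norm_num),
        torusEx_norm0]
      rw [show ((2:ℝ)) = ((2:ℕ):ℝ) by norm_num, Real.rpow_natCast]
    simp_rw [h1]
    rw [← ofReal_integral_eq_lintegral_ofReal]
    · rw [parseval]
    · exact ((hfc.norm.pow 2).integrableOn_Icc)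
    · filter_upwards with y using by positivity
  simp_rw [hinner]
  rw [setLIntegral_const, Real.volume_Icc]
  have h2 : (2*π) - 0 = 2*π := by ring
  rw [h2, ← ENNReal.ofReal_mul (by positivity)]
  rw [ENNReal.ofReal_rpow_of_nonneg (by positivity) (by norm_num)]
  congr 1
  rw [show (2*π*(M:ℝ)) * (2*π) = (2*π)^2 * M by ring]
  rw [← Real.sqrt_eq_rpow, Real.sqrt_mul (by positivity), Real.sqrt_sq (by positivity)]

lemma pointwise_lb (α : ℝ) (N : ℕ) (hN : 2 ≤ N) {t x y : ℝ}
    (ht0 : 0 ≤ t) (ht1 : t ≤ 1/10) (hy0 : 0 ≤ y) (hy1 : y ≤ 1/(10*Real.sqrt N)) :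
    (9/10 : ℝ) * (Nat.floor (Real.sqrt N) : ℝ) ≤ ‖torusEx α N t x y‖ := by
  set M := Nat.floor (Real.sqrt N) with hM
  have hsN : (1:ℝ) ≤ Real.sqrt N := by
    rw [show (1:ℝ) = Real.sqrt 1 by simp]
    exact Real.sqrt_le_sqrt (by exact_mod_cast Nat.one_le_iff_ne_zero.mpr (by omega))
  have hsN0 : (0:ℝ) < Real.sqrt N := lt_of_lt_of_le one_pos hsN
  have hMle : (M:ℝ) ≤ Real.sqrt N := Nat.floor_le (Real.sqrt_nonneg _)
  have hM2 : ((M:ℝ))^2 ≤ (N:ℝ) := by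
    calc ((M:ℝ))^2 ≤ (Real.sqrt N)^2 := pow_le_pow_left₀ (by positivity) hMle 2
      _ = (N:ℝ) := Real.sq_sqrt (by positivity)
  have hNpos : (0:ℝ) < N := by exact_mod_cast (show 0 < N by omega)
  rw [torusEx_norm]
  have key : ∀ η ∈ Finset.Icc 1 M, (49/50 : ℝ) ≤
      (Complex.exp ((((η : ℝ) * y + t * ((η : ℝ) ^ 2 / N) : ℝ)) * Complex.I)).re := by
    intro η hη
    rw [Complex.exp_ofReal_mul_I_re]
    set θ : ℝ := (η : ℝ) * y + t * ((η : ℝ) ^ 2 / N) with hθ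
    have hηM : (η:ℝ) ≤ M := by exact_mod_cast (Finset.mem_Icc.mp hη).2
    have hη0 : (0:ℝ) ≤ (η:ℝ) := by positivity
    have hθ0 : 0 ≤ θ := by
      have h1 : 0 ≤ (η:ℝ) * y := mul_nonneg hη0 hy0
      have h2 : 0 ≤ t * ((η : ℝ) ^ 2 / N) := mul_nonneg ht0 (by positivity)
      positivity
    have hθ1 : θ ≤ 1/5 := by
      have h1 : (η:ℝ) * y ≤ 1/10 := by
        calc (η:ℝ) * y ≤ Real.sqrt N * (1/(10*Real.sqrt N)) :=
              mul_le_mul (hηM.trans hMle) hy1 hy0 (Real.sqrt_nonneg _)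
          _ = 1/10 := by field_simp
      have h2 : t * ((η : ℝ) ^ 2 / N) ≤ 1/10 := by
        have hq : (η : ℝ) ^ 2 / N ≤ 1 := by
          rw [div_le_one hNpos]
          calc (η:ℝ)^2 ≤ (M:ℝ)^2 := pow_le_pow_left₀ hη0 hηM 2
            _ ≤ N := hM2
        calc t * ((η : ℝ) ^ 2 / N) ≤ (1/10) * 1 :=
              mul_le_mul ht1 hq (by positivity) (by norm_num)
          _ = 1/10 := by norm_num
      linarith
    have := Real.one_sub_sq_div_two_le_cos (x := θ)
    nlinarith [mul_self_le_mul_self hθ0 hθ1]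
  calc (9/10 : ℝ) * (M:ℝ) ≤ (49/50 : ℝ) * (M:ℝ) := by
        have : (0:ℝ) ≤ (M:ℝ) := by positivity
        nlinarith
    _ ≤ ∑ η ∈ Finset.Icc 1 M,
        (Complex.exp ((((η : ℝ) * y + t * ((η : ℝ) ^ 2 / N) : ℝ)) * Complex.I)).re := by
        have hcard : (Finset.Icc 1 M).card = M := by
          rw [Nat.card_Icc]; omega
        calc (49/50 : ℝ) * (M:ℝ) = ∑ _η ∈ Finset.Icc 1 M, (49/50 : ℝ) := by
              rw [Finset.sum_const, hcard]; ring
          _ ≤ _ := Finset.sum_le_sum key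
    _ = (∑ η ∈ Finset.Icc 1 M,
        Complex.exp ((((η : ℝ) * y + t * ((η : ℝ) ^ 2 / N) : ℝ)) * Complex.I)).re := by
        rw [Complex.re_sum]
    _ ≤ _ := Complex.re_le_norm _

lemma eLpNorm4_lb (α : ℝ) (N : ℕ) (hN : 2 ≤ N) :
    ENNReal.ofReal ((1/10) * (N : ℝ) ^ ((3:ℝ)/8)) ≤
      eLpNorm (fun z : ℝ × ℝ × ℝ => torusEx α N z.1 z.2.1 z.2.2) 4
        (volume.restrict
          (Set.Icc (0:ℝ) 1 ×ˢ Set.Icc (0:ℝ) (2*π) ×ˢ Set.Icc (0:ℝ) (2*π))) := by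
  set M := Nat.floor (Real.sqrt N) with hM
  have hsN : (1:ℝ) ≤ Real.sqrt N := by
    rw [show (1:ℝ) = Real.sqrt 1 by simp]
    exact Real.sqrt_le_sqrt (by exact_mod_cast Nat.one_le_iff_ne_zero.mpr (by omega))
  have hsN0 : (0:ℝ) < Real.sqrt N := lt_of_lt_of_le one_pos hsN
  have hM1 : (1:ℝ) ≤ (M:ℝ) := by
    have : 1 ≤ M := Nat.le_floor (by exact_mod_cast hsN)
    exact_mod_cast this
  have hMhalf : Real.sqrt N / 2 ≤ (M:ℝ) := by
    rcases le_or_gt (Real.sqrt N) 2 with h | h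
    · linarith
    · have h1 : Real.sqrt N - 1 < (M:ℝ) := Nat.sub_one_lt_floor _
      linarith
  set R : Set (ℝ × ℝ × ℝ) :=
    Set.Icc (0:ℝ) (1/10) ×ˢ Set.Icc (0:ℝ) (2*π) ×ˢ Set.Icc (0:ℝ) (1/(10*Real.sqrt N)) with hR
  have hRsub : R ⊆ Set.Icc (0:ℝ) 1 ×ˢ Set.Icc (0:ℝ) (2*π) ×ˢ Set.Icc (0:ℝ) (2*π) := by
    refine Set.prod_mono (Set.Icc_subset_Icc le_rfl (by norm_num)) (Set.prod_mono le_rfl ?_)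
    refine Set.Icc_subset_Icc le_rfl ?_
    have h1 : 1/(10*Real.sqrt N) ≤ 1/10 := by
      rw [div_le_div_iff₀ (by positivity) (by norm_num)]
      nlinarith
    have := Real.pi_gt_three
    linarith
  rw [eLpNorm_eq_lintegral_rpow_enorm_toReal (by norm_num) (by norm_num)]; simp_rw [enorm_eq_nnnorm]
  have htr : ENNReal.toReal 4 = 4 := by norm_num
  rw [htr]
  have hvol : volume R = ENNReal.ofReal ((1/10) * ((2*π) * (1/(10*Real.sqrt N)))) := by
    rw [hR, MeasureTheory.Measure.volume_eq_prod, Measure.prod_prod,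
      MeasureTheory.Measure.volume_eq_prod, Measure.prod_prod,
      Real.volume_Icc, Real.volume_Icc, Real.volume_Icc]
    rw [sub_zero, sub_zero, sub_zero,
      ← ENNReal.ofReal_mul (by positivity : (0:ℝ) ≤ 2*π),
      ← ENNReal.ofReal_mul (by norm_num : (0:ℝ) ≤ 1/10)]
  have hmono : ENNReal.ofReal ((9/10 * M)^4) * volume R ≤
      ∫⁻ z in (Set.Icc (0:ℝ) 1 ×ˢ Set.Icc (0:ℝ) (2*π) ×ˢ Set.Icc (0:ℝ) (2*π)),
        ((‖torusEx α N z.1 z.2.1 z.2.2‖₊ : ENNReal)) ^ (4:ℝ) := by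
    have h1 : ∫⁻ z in R, ((‖torusEx α N z.1 z.2.1 z.2.2‖₊ : ENNReal)) ^ (4:ℝ) ≤
        ∫⁻ z in (Set.Icc (0:ℝ) 1 ×ˢ Set.Icc (0:ℝ) (2*π) ×ˢ Set.Icc (0:ℝ) (2*π)),
        ((‖torusEx α N z.1 z.2.1 z.2.2‖₊ : ENNReal)) ^ (4:ℝ) :=
      lintegral_mono_set hRsub
    refine le_trans ?_ h1
    rw [← setLIntegral_const R _]
    refine setLIntegral_mono' ?_ ?_
    · exact (measurableSet_Icc.prod (measurableSet_Icc.prod measurableSet_Icc))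
    · rintro ⟨t, x, y⟩ ⟨ht, hx, hy⟩
      have hlb := pointwise_lb α N hN (x := x) ht.1 ht.2 hy.1 hy.2
      have h0 : (0:ℝ) ≤ 9/10 * (M:ℝ) := by positivity
      rw [← enorm_eq_nnnorm, ← ofReal_norm,
        ENNReal.ofReal_rpow_of_nonneg (norm_nonneg _) (by norm_num)]
      refine ENNReal.ofReal_le_ofReal ?_
      calc ((9/10 * (M:ℝ))^4 : ℝ) ≤ ‖torusEx α N t x y‖^4 := pow_le_pow_left₀ h0 hlb 4
        _ = ‖torusEx α N t x y‖ ^ ((4:ℕ):ℝ) := by rw [Real.rpow_natCast]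
        _ = _ := by norm_num
  refine le_trans ?_ (ENNReal.rpow_le_rpow hmono (by norm_num : (0:ℝ) ≤ 1/4))
  rw [hvol, ← ENNReal.ofReal_mul (by positivity),
    ENNReal.ofReal_rpow_of_nonneg (by positivity) (by norm_num)]
  refine ENNReal.ofReal_le_ofReal ?_
  have hkey : ((1/10) * (N : ℝ) ^ ((3:ℝ)/8))^(4:ℕ) ≤
      (9/10 * (M:ℝ))^4 * ((1/10) * ((2*π) * (1/(10*Real.sqrt N)))) := by
    have hNpos : (0:ℝ) < N := by exact_mod_cast (show 0 < N by omega)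
    have h38 : (((N : ℝ) ^ ((3:ℝ)/8))^(4:ℕ) : ℝ) = (Real.sqrt N)^3 := by
      rw [← Real.rpow_natCast ((N:ℝ) ^ ((3:ℝ)/8)) 4, ← Real.rpow_mul hNpos.le]
      rw [show (3:ℝ)/8 * (4:ℕ) = (1/2) * 3 by push_cast; ring]
      rw [Real.rpow_mul hNpos.le, Real.sqrt_eq_rpow]
      rw [show ((3:ℝ)) = ((3:ℕ):ℝ) by norm_num, Real.rpow_natCast]
    set s := Real.sqrt N with hs
    calc ((1/10) * (N : ℝ) ^ ((3:ℝ)/8))^(4:ℕ)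
        = (1/10:ℝ)^4 * s^3 := by rw [mul_pow, h38]
      _ ≤ (9/20*s)^4 * ((1/10) * ((2*π) * (1/(10*s)))) := by
          have heq : (9/20*s)^4 * ((1/10) * ((2*π) * (1/(10*s))))
              = (9/20:ℝ)^4 * π / 50 * s^3 := by
            field_simp
            ring
          rw [heq]
          have h3 : 3 * s^3 ≤ π * s^3 :=
            mul_le_mul_of_nonneg_right Real.pi_gt_three.le (pow_nonneg hsN0.le 3)
          have hs3 : (1:ℝ) ≤ s^3 := one_le_pow₀ hsN
          nlinarith
      _ ≤ (9/10 * (M:ℝ))^4 * ((1/10) * ((2*π) * (1/(10*s)))) := by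
          have h1 : (9/20*s : ℝ) ≤ 9/10*(M:ℝ) := by linarith
          have h2 := pow_le_pow_left₀ (by positivity : (0:ℝ) ≤ 9/20*s) h1 4
          have hpos : (0:ℝ) ≤ (1/10) * ((2*π) * (1/(10*s))) := by positivity
          exact mul_le_mul_of_nonneg_right h2 hpos
  calc (1/10) * (N : ℝ) ^ ((3:ℝ)/8)
      = (((1/10) * (N : ℝ) ^ ((3:ℝ)/8))^(4:ℕ) : ℝ) ^ ((1:ℝ)/4) := by
        rw [← Real.rpow_natCast _ 4, ← Real.rpow_mul (by positivity)]
        norm_num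
    _ ≤ _ := Real.rpow_le_rpow (by positivity) hkey (by norm_num)

end Aux

lemma sqrtM_bounds (N : ℕ) (hN : 2 ≤ N) :
    (N:ℝ)^((1:ℝ)/4) / 2 ≤ Real.sqrt (Nat.floor (Real.sqrt N)) ∧
      Real.sqrt (Nat.floor (Real.sqrt N)) ≤ (N:ℝ)^((1:ℝ)/4) := by
  set M := Nat.floor (Real.sqrt N) with hM
  have hNpos : (0:ℝ) < N := by exact_mod_cast (show 0 < N by omega)
  have hsN : (1:ℝ) ≤ Real.sqrt N := by
    rw [show (1:ℝ) = Real.sqrt 1 by simp]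
    exact Real.sqrt_le_sqrt (by exact_mod_cast Nat.one_le_iff_ne_zero.mpr (by omega))
  have hMle : (M:ℝ) ≤ Real.sqrt N := Nat.floor_le (Real.sqrt_nonneg _)
  have hM1 : (1:ℝ) ≤ (M:ℝ) := by
    have : 1 ≤ M := Nat.le_floor (by exact_mod_cast hsN)
    exact_mod_cast this
  have hMhalf : Real.sqrt N / 2 ≤ (M:ℝ) := by
    rcases le_or_gt (Real.sqrt N) 2 with h | h
    · linarith
    · have h1 : Real.sqrt N - 1 < (M:ℝ) := Nat.sub_one_lt_floor _
      linarith
  set q : ℝ := (N:ℝ)^((1:ℝ)/4) with hq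
  have hq0 : 0 ≤ q := Real.rpow_nonneg hNpos.le _
  have hq2 : q^2 = Real.sqrt N := by
    rw [hq, ← Real.rpow_natCast ((N:ℝ)^((1:ℝ)/4)) 2, ← Real.rpow_mul hNpos.le]
    rw [show (1:ℝ)/4 * ((2:ℕ):ℝ) = 1/2 by push_cast; ring, ← Real.sqrt_eq_rpow]
  constructor
  · rw [show q/2 = Real.sqrt ((q/2)^2) by rw [Real.sqrt_sq (by positivity)]]
    refine Real.sqrt_le_sqrt ?_
    nlinarith
  · rw [show q = Real.sqrt (q^2) by rw [Real.sqrt_sq hq0]]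
    exact Real.sqrt_le_sqrt (by nlinarith)

/-- Sharpness of the torus Strichartz estimate: for the data `u₀` above one has
`‖S_α(t)u₀‖_{L⁴([0,1]×𝕋²)} ≳ N^{3/8}` while `c N^{1/4} ≤ ‖u₀‖_{L²(𝕋²)} ≤ c⁻¹ N^{1/4}`;
consequently the estimate `‖S_α(t)u₀‖_{L⁴} ≲ N^{s}‖u₀‖_{L²}` fails for every `s < 1/8`. -/
theorem torus_strichartz_sharpness :
    ∃ c > (0 : ℝ), ∀ α : ℝ, 2 ≤ α →
      (∀ N : ℕ, 2 ≤ N →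
        ENNReal.ofReal (c * (N : ℝ) ^ ((3 : ℝ) / 8)) ≤
          eLpNorm (fun z : ℝ × ℝ × ℝ => torusEx α N z.1 z.2.1 z.2.2) 4
            (volume.restrict
              (Set.Icc (0 : ℝ) 1 ×ˢ Set.Icc (0 : ℝ) (2 * Real.pi) ×ˢ
                Set.Icc (0 : ℝ) (2 * Real.pi))) ∧
        eLpNorm (fun z : ℝ × ℝ => torusEx α N 0 z.1 z.2) 2
            (volume.restrict
              (Set.Icc (0 : ℝ) (2 * Real.pi) ×ˢ Set.Icc (0 : ℝ) (2 * Real.pi))) ≤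
          ENNReal.ofReal (c⁻¹ * (N : ℝ) ^ ((1 : ℝ) / 4)) ∧
        ENNReal.ofReal (c * (N : ℝ) ^ ((1 : ℝ) / 4)) ≤
          eLpNorm (fun z : ℝ × ℝ => torusEx α N 0 z.1 z.2) 2
            (volume.restrict
              (Set.Icc (0 : ℝ) (2 * Real.pi) ×ˢ Set.Icc (0 : ℝ) (2 * Real.pi)))) ∧
      ∀ s C : ℝ, s < 1 / 8 → 0 < C → ∃ N : ℕ, 2 ≤ N ∧
        ENNReal.ofReal (C * (N : ℝ) ^ s) *
            eLpNorm (fun z : ℝ × ℝ => torusEx α N 0 z.1 z.2) 2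
              (volume.restrict
                (Set.Icc (0 : ℝ) (2 * Real.pi) ×ˢ Set.Icc (0 : ℝ) (2 * Real.pi))) <
          eLpNorm (fun z : ℝ × ℝ × ℝ => torusEx α N z.1 z.2.1 z.2.2) 4
            (volume.restrict
              (Set.Icc (0 : ℝ) 1 ×ˢ Set.Icc (0 : ℝ) (2 * Real.pi) ×ˢ
                Set.Icc (0 : ℝ) (2 * Real.pi))) := by
  refine ⟨1/10, by norm_num, fun α _ => ⟨fun N hN => ⟨eLpNorm4_lb α N hN, ?_, ?_⟩, ?_⟩⟩
  · -- L² upper bound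
    rw [eLpNorm2_eq]
    refine ENNReal.ofReal_le_ofReal ?_
    obtain ⟨_, hup⟩ := sqrtM_bounds N hN
    have hq0 : (0:ℝ) ≤ (N:ℝ)^((1:ℝ)/4) :=
      Real.rpow_nonneg (by positivity) _
    have hπ := Real.pi_lt_four
    have hπ0 := Real.pi_pos
    have hMs0 : (0:ℝ) ≤ Real.sqrt (Nat.floor (Real.sqrt N)) := Real.sqrt_nonneg _
    rw [show ((1:ℝ)/10)⁻¹ = 10 by norm_num]
    nlinarith
  · -- L² lower bound
    rw [eLpNorm2_eq]
    refine ENNReal.ofReal_le_ofReal ?_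
    obtain ⟨hlo, _⟩ := sqrtM_bounds N hN
    have hq0 : (0:ℝ) ≤ (N:ℝ)^((1:ℝ)/4) :=
      Real.rpow_nonneg (by positivity) _
    have hπ := Real.pi_gt_three
    nlinarith
  · -- failure of any exponent s < 1/8
    intro s C hs hC
    have hε : 0 < 1/8 - s := by linarith
    obtain ⟨n, hn⟩ := exists_nat_gt (max 2 ((100*C) ^ ((1:ℝ)/(1/8 - s))))
    have h2 : (2:ℝ) < n := lt_of_le_of_lt (le_max_left _ _) hn
    have hN2 : 2 ≤ n := by exact_mod_cast h2.le
    refine ⟨n, hN2, ?_⟩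
    have hNpos : (0:ℝ) < n := by linarith
    have hKlt : (100*C) ^ ((1:ℝ)/(1/8-s)) < n := lt_of_le_of_lt (le_max_right _ _) hn
    have h100 : (0:ℝ) < 100*C := by linarith
    have hNε : 100*C < (n:ℝ) ^ ((1:ℝ)/8 - s) := by
      have h1 := Real.rpow_lt_rpow (Real.rpow_nonneg h100.le _) hKlt hε
      rw [← Real.rpow_mul h100.le, one_div, inv_mul_cancel₀ hε.ne', Real.rpow_one] at h1
      convert h1 using 2
    rw [eLpNorm2_eq, ← ENNReal.ofReal_mul (by positivity)]
    refine lt_of_lt_of_le ?_ (eLpNorm4_lb α n hN2)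
    rw [ENNReal.ofReal_lt_ofReal_iff (by positivity)]
    obtain ⟨_, hup⟩ := sqrtM_bounds n hN2
    set q : ℝ := (n:ℝ)^((1:ℝ)/4) with hq
    have hq0 : (0:ℝ) < q := Real.rpow_pos_of_pos hNpos _
    have hns : (0:ℝ) < (n:ℝ)^s := Real.rpow_pos_of_pos hNpos _
    have hrw : (n:ℝ)^((3:ℝ)/8) = (n:ℝ)^((1:ℝ)/8 - s) * ((n:ℝ)^s * q) := by
      rw [hq, ← Real.rpow_add hNpos, ← Real.rpow_add hNpos]
      congr 1
      ring
    have hπ := Real.pi_lt_four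
    have hπ0 := Real.pi_pos
    calc C * (n:ℝ)^s * (2*π*Real.sqrt (Nat.floor (Real.sqrt n)))
        ≤ C * (n:ℝ)^s * (2*π*q) := by
          refine mul_le_mul_of_nonneg_left ?_ (by positivity)
          refine mul_le_mul_of_nonneg_left hup (by positivity)
      _ = 2*π*C * ((n:ℝ)^s * q) := by ring
      _ < 10*C * ((n:ℝ)^s * q) := by
          have hP : (0:ℝ) < (n:ℝ)^s * q := by positivity
          nlinarith [mul_lt_mul_of_pos_right (show (2*π:ℝ) < 10 by linarith)
            (mul_pos hC hP)]
      _ ≤ (1/10) * ((n:ℝ)^((1:ℝ)/8 - s)) * ((n:ℝ)^s * q) := by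
          have hP : (0:ℝ) < (n:ℝ)^s * q := by positivity
          nlinarith [mul_lt_mul_of_pos_right hNε hP]
      _ = (1/10) * (n:ℝ)^((3:ℝ)/8) := by rw [hrw]; ring
end
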